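/- arXiv:2509.23365 — 2 statements merged into one kernel-verified Lean document; each statement's English description precedes it below -/
import Mathlib

section
/- Suppose all coordinates of μ ∈ ℝ^V equal a common value μ̄ ∈ ℝ, so that ξ_u(μ) = λ(1{u ∈ N_c} + μ̄·d_u) for all u ∈ V. Then for every v ∈ V, the gradient of the permutation-averaged coconut loss satisfies ∂L^coco/∂μ_v (μ) = (1/(n√K)) · ( −d_p + Σ_{u ∈ N_{c+1}} d_u·exp(ξ_u(μ)) / (exp(ξ_+(μ)) + n − |N_{c+1}|) ); in particular this value is the same for every v ∈ V. -/
open Finset Filter Matrix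

variable {V : Type*}

/-- `ball E r j` : set of vertices reachable from `r` within `j` steps along edges in `E`. -/
def ball [Fintype V] [DecidableEq V] (E : Finset (V × V)) (r : V) : ℕ → Finset V
  | 0 => {r}
  | j + 1 => Finset.univ.filter fun v => v ∈ ball E r j ∨ ∃ u ∈ ball E r j, (u, v) ∈ E

/-- in-degree of `v` restricted to sources in `N_c`. -/
def degc [Fintype V] [DecidableEq V] (E : Finset (V × V)) (r : V) (c : ℕ) (v : V) : ℕ :=
  ((ball E r c).filter fun u => (u, v) ∈ E).card

/-- λ = 1/√K with K = |N_c|. -/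
noncomputable def lamc [Fintype V] [DecidableEq V] (E : Finset (V × V)) (r : V) (c : ℕ) : ℝ :=
  1 / Real.sqrt ((ball E r c).card : ℝ)

/-- the logit ξ_v(μ). -/
noncomputable def xi [Fintype V] [DecidableEq V] (E : Finset (V × V)) (r : V) (c : ℕ)
    (μ : V → ℝ) (v : V) : ℝ :=
  lamc E r c * (if v ∈ ball E r c then 1 else 0)
    + lamc E r c * ∑ u ∈ (ball E r c).filter (fun u => (u, v) ∈ E), μ u

/-- BFS loss. -/
noncomputable def bfsLoss [Fintype V] [DecidableEq V] (E : Finset (V × V)) (r : V) (c : ℕ)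
    (μ : V → ℝ) : ℝ :=
  - Real.log ((∑ v ∈ ball E r (c + 1), Real.exp (xi E r c μ v)) /
      ∑ v : V, Real.exp (xi E r c μ v))

/-- edge set of the permuted instance. -/
def permE [Fintype V] [DecidableEq V] (π : Equiv.Perm V) (E : Finset (V × V)) :
    Finset (V × V) :=
  E.image fun e => (π e.1, π e.2)

/-- permutation-averaged BFS loss. -/
noncomputable def avgBfsLoss [Fintype V] [DecidableEq V] (E : Finset (V × V)) (r : V) (c : ℕ)
    (μ : V → ℝ) : ℝ :=
  ((Nat.factorial (Fintype.card V) : ℝ))⁻¹ *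
    ∑ π : Equiv.Perm V, bfsLoss (permE π E) (π r) c μ

/-- coconut loss with target `p`. -/
noncomputable def cocoLoss [Fintype V] [DecidableEq V] (E : Finset (V × V)) (r : V) (c : ℕ)
    (p : V) (μ : V → ℝ) : ℝ :=
  - Real.log (Real.exp (xi E r c μ p) / ∑ v : V, Real.exp (xi E r c μ v))

/-- permutation-averaged coconut loss. -/
noncomputable def avgCocoLoss [Fintype V] [DecidableEq V] (E : Finset (V × V)) (r : V) (c : ℕ)
    (p : V) (μ : V → ℝ) : ℝ :=
  ((Nat.factorial (Fintype.card V) : ℝ))⁻¹ *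
    ∑ π : Equiv.Perm V, cocoLoss (permE π E) (π r) c (π p) μ

/-- the scalar function F. -/
noncomputable def Fc [Fintype V] [DecidableEq V] (E : Finset (V × V)) (r : V) (c : ℕ)
    (x : ℝ) : ℝ :=
  (∑ u ∈ ball E r (c + 1), (degc E r c u : ℝ) *
      Real.exp (lamc E r c * ((if u ∈ ball E r c then 1 else 0) + x * (degc E r c u : ℝ))))
    / ((∑ u ∈ ball E r (c + 1),
        Real.exp (lamc E r c * ((if u ∈ ball E r c then 1 else 0) + x * (degc E r c u : ℝ))))
      + ((Fintype.card V : ℝ) - ((ball E r (c + 1)).card : ℝ)))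

section Helpers
variable [Fintype V] [DecidableEq V]

lemma mem_permE (π : Equiv.Perm V) (E : Finset (V × V)) (a b : V) :
    (π a, π b) ∈ permE π E ↔ (a, b) ∈ E := by
  constructor
  · intro h
    simp only [permE, Finset.mem_image, Prod.ext_iff] at h
    obtain ⟨⟨x, y⟩, hxy, hx, hy⟩ := h
    rwa [← π.injective hx, ← π.injective hy]
  · intro h
    exact Finset.mem_image.2 ⟨(a, b), h, rfl⟩

lemma ball_permE (π : Equiv.Perm V) (E : Finset (V × V)) (r : V) (j : ℕ) :
    ball (permE π E) (π r) j = (ball E r j).image π := by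
  induction j with
  | zero => simp [ball]
  | succ j ih =>
    ext v
    obtain ⟨w, rfl⟩ := π.surjective v
    simp only [ball, Finset.mem_filter, Finset.mem_univ, true_and, ih,
      Finset.mem_image]
    constructor
    · rintro (⟨w', hw', hww⟩ | ⟨u, ⟨u', hu', rfl⟩, hu⟩)
      · exact ⟨w, Or.inl (π.injective hww ▸ hw'), rfl⟩
      · exact ⟨w, Or.inr ⟨u', hu', (mem_permE π E u' w).1 hu⟩, rfl⟩
    · rintro ⟨w', hw', hww⟩
      rcases π.injective hww ▸ hw' with h | ⟨u, hu, he⟩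
      · exact Or.inl ⟨w, h, rfl⟩
      · exact Or.inr ⟨π u, ⟨u, hu, rfl⟩, (mem_permE π E u w).2 he⟩

lemma filter_permE (π : Equiv.Perm V) (E : Finset (V × V)) (r : V) (c : ℕ) (w : V) :
    ((ball (permE π E) (π r) c).filter fun u => (u, π w) ∈ permE π E)
      = (((ball E r c).filter fun u => (u, w) ∈ E)).image π := by
  rw [ball_permE, Finset.filter_image]
  ext u
  simp [Finset.mem_filter, mem_permE]

lemma lamc_permE (π : Equiv.Perm V) (E : Finset (V × V)) (r : V) (c : ℕ) :
    lamc (permE π E) (π r) c = lamc E r c := by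
  rw [lamc, lamc, ball_permE, Finset.card_image_of_injective _ π.injective]

lemma degc_permE (π : Equiv.Perm V) (E : Finset (V × V)) (r : V) (c : ℕ) (w : V) :
    degc (permE π E) (π r) c (π w) = degc E r c w := by
  rw [degc, degc, filter_permE, Finset.card_image_of_injective _ π.injective]

lemma xi_permE (π : Equiv.Perm V) (E : Finset (V × V)) (r : V) (c : ℕ) (μ : V → ℝ) (w : V) :
    xi (permE π E) (π r) c μ (π w) = xi E r c (fun u => μ (π u)) w := by
  rw [xi, xi, lamc_permE, filter_permE, ball_permE,
    Finset.sum_image (fun a _ b _ h => π.injective h)]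
  congr 2
  simp [Finset.mem_image_of_mem, π.injective.mem_finset_image]

end Helpers

noncomputable def bcf [Fintype V] [DecidableEq V] (E : Finset (V × V)) (r : V) (c : ℕ)
    (v w : V) : ℝ :=
  lamc E r c * (if v ∈ (ball E r c).filter (fun u => (u, w) ∈ E) then 1 else 0)

section Deriv
variable [Fintype V] [DecidableEq V]

lemma hasDerivAt_xi (E' : Finset (V × V)) (r' : V) (c : ℕ) (μ : V → ℝ) (v w : V) (x₀ : ℝ) :
    HasDerivAt (fun x => xi E' r' c (Function.update μ v x) w) (bcf E' r' c v w) x₀ := by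
  have hsum : HasDerivAt (fun x => ∑ u ∈ (ball E' r' c).filter (fun u => (u, w) ∈ E'),
      Function.update μ v x u)
      (if v ∈ (ball E' r' c).filter (fun u => (u, w) ∈ E') then 1 else 0) x₀ := by
    have := HasDerivAt.fun_sum (u := (ball E' r' c).filter (fun u => (u, w) ∈ E'))
      (A := fun u x => Function.update μ v x u)
      (A' := fun u => if u = v then (1 : ℝ) else 0)
      (fun u _ => by
        by_cases h : u = v
        · subst h
          simpa [Function.update_self] using (hasDerivAt_id' x₀)
        · simpa [Function.update_of_ne h, h] using hasDerivAt_const x₀ (μ u))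
    rwa [Finset.sum_ite_eq' _ v (fun _ => (1:ℝ))] at this
  have h2 := hsum.const_mul (lamc E' r' c)
  have h3 := h2.const_add (lamc E' r' c * (if w ∈ ball E' r' c then 1 else 0))
  simpa [xi, bcf] using h3

lemma hasDerivAt_cocoLoss [Nonempty V] (E' : Finset (V × V)) (r' : V) (c : ℕ) (p' : V)
    (μ : V → ℝ) (v : V) :
    HasDerivAt (fun x => cocoLoss E' r' c p' (Function.update μ v x))
      (-(bcf E' r' c v p') + (∑ w : V, bcf E' r' c v w * Real.exp (xi E' r' c μ w))
          / (∑ w : V, Real.exp (xi E' r' c μ w))) (μ v) := by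
  have hZ : ∀ ν : V → ℝ, 0 < ∑ w : V, Real.exp (xi E' r' c ν w) :=
    fun ν => Finset.sum_pos (fun _ _ => Real.exp_pos _) Finset.univ_nonempty
  have hfun : (fun x => cocoLoss E' r' c p' (Function.update μ v x))
      = fun x => Real.log (∑ w : V, Real.exp (xi E' r' c (Function.update μ v x) w))
          - xi E' r' c (Function.update μ v x) p' := by
    funext x
    rw [cocoLoss, Real.log_div (Real.exp_ne_zero _) (ne_of_gt (hZ _)), Real.log_exp]
    ring
  rw [hfun]
  have hxi : ∀ w : V, HasDerivAt (fun x => xi E' r' c (Function.update μ v x) w)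
      (bcf E' r' c v w) (μ v) := fun w => hasDerivAt_xi E' r' c μ v w (μ v)
  have hZ' : HasDerivAt (fun x => ∑ w : V, Real.exp (xi E' r' c (Function.update μ v x) w))
      (∑ w : V, Real.exp (xi E' r' c (Function.update μ v (μ v)) w) * bcf E' r' c v w)
      (μ v) := HasDerivAt.fun_sum (fun w _ => (hxi w).exp)
  have H := (hZ'.log (ne_of_gt (hZ _))).fun_sub (hxi p')
  refine H.congr_deriv ?_
  simp only [Function.update_eq_self, mul_comm]
  ring

end Deriv

noncomputable def gfun [Fintype V] [DecidableEq V] (E : Finset (V × V)) (r : V) (c : ℕ)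
    (p : V) (μ : V → ℝ) (u : V) : ℝ :=
  -(bcf E r c u p) + (∑ w : V, bcf E r c u w * Real.exp (xi E r c μ w))
      / (∑ w : V, Real.exp (xi E r c μ w))

section Sym
variable [Fintype V] [DecidableEq V]

lemma bcf_permE (π : Equiv.Perm V) (E : Finset (V × V)) (r : V) (c : ℕ) (v w : V) :
    bcf (permE π E) (π r) c v (π w) = bcf E r c (π⁻¹ v) w := by
  rw [bcf, bcf, lamc_permE, filter_permE]
  have hmem : (v ∈ (((ball E r c).filter fun u => (u, w) ∈ E)).image π)
      ↔ (π⁻¹ v ∈ (ball E r c).filter fun u => (u, w) ∈ E) := by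
    rw [← π.injective.mem_finset_image (a := π⁻¹ v)]
    simp
  simp only [hmem]

lemma Dpi_eq (π : Equiv.Perm V) (E : Finset (V × V)) (r : V) (c : ℕ) (p : V)
    (μ : V → ℝ) (μbar : ℝ) (hμ : ∀ u : V, μ u = μbar) (v : V) :
    -(bcf (permE π E) (π r) c v (π p))
      + (∑ w : V, bcf (permE π E) (π r) c v w * Real.exp (xi (permE π E) (π r) c μ w))
        / (∑ w : V, Real.exp (xi (permE π E) (π r) c μ w))
      = gfun E r c p μ (π⁻¹ v) := by
  have hcomp : (fun u => μ (π u)) = μ := funext fun u => by rw [hμ, hμ]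
  have h1 : ∀ w : V, xi (permE π E) (π r) c μ (π w) = xi E r c μ w := fun w => by
    rw [xi_permE, hcomp]
  rw [gfun, ← Equiv.sum_comp π
      (fun w => bcf (permE π E) (π r) c v w * Real.exp (xi (permE π E) (π r) c μ w)),
    ← Equiv.sum_comp π (fun w => Real.exp (xi (permE π E) (π r) c μ w))]
  simp only [bcf_permE, h1]

lemma sum_perm_apply (g : V → ℝ) (v : V) :
    (Fintype.card V : ℝ) * ∑ π : Equiv.Perm V, g (π v)
      = (Nat.factorial (Fintype.card V) : ℝ) * ∑ u : V, g u := by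
  have h1 : ∀ u : V, ∑ π : Equiv.Perm V, g (π u) = ∑ π : Equiv.Perm V, g (π v) := by
    intro u
    have h := Equiv.sum_comp (Equiv.mulRight (Equiv.swap u v))
      (fun π : Equiv.Perm V => g (π u))
    simp only [Equiv.coe_mulRight, Equiv.Perm.mul_apply, Equiv.swap_apply_left] at h
    exact h.symm
  calc (Fintype.card V : ℝ) * ∑ π : Equiv.Perm V, g (π v)
      = ∑ _u : V, ∑ π : Equiv.Perm V, g (π v) := by
        rw [Finset.sum_const, nsmul_eq_mul, Finset.card_univ]
    _ = ∑ u : V, ∑ π : Equiv.Perm V, g (π u) := by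
        exact Finset.sum_congr rfl fun u _ => (h1 u).symm
    _ = ∑ π : Equiv.Perm V, ∑ u : V, g (π u) := Finset.sum_comm
    _ = ∑ π : Equiv.Perm V, ∑ u : V, g u :=
        Finset.sum_congr rfl fun π _ => Equiv.sum_comp π g
    _ = (Nat.factorial (Fintype.card V) : ℝ) * ∑ u : V, g u := by
        rw [Finset.sum_const, nsmul_eq_mul, Finset.card_univ, Fintype.card_perm]

lemma not_mem_ball_succ {E : Finset (V × V)} {r : V} {c : ℕ} {w : V}
    (hw : w ∉ ball E r (c + 1)) :
    w ∉ ball E r c ∧ (ball E r c).filter (fun u => (u, w) ∈ E) = ∅ := by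
  rw [ball, Finset.mem_filter] at hw
  push_neg at hw
  obtain ⟨h1, h2⟩ := hw (Finset.mem_univ w)
  exact ⟨h1, Finset.filter_eq_empty_iff.2 fun u hu => h2 u hu⟩

lemma xi_eq_zero {E : Finset (V × V)} {r : V} {c : ℕ} {w : V} (μ : V → ℝ)
    (hw : w ∉ ball E r (c + 1)) : xi E r c μ w = 0 := by
  obtain ⟨h1, h2⟩ := not_mem_ball_succ hw
  simp [xi, h1, h2]

lemma degc_eq_zero {E : Finset (V × V)} {r : V} {c : ℕ} {w : V}
    (hw : w ∉ ball E r (c + 1)) : degc E r c w = 0 := by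
  obtain ⟨-, h2⟩ := not_mem_ball_succ hw
  simp [degc, h2]

end Sym

lemma mem_ball_self [Fintype V] [DecidableEq V] (E : Finset (V × V)) (r : V) (j : ℕ) :
    r ∈ ball E r j := by
  induction j with
  | zero => simp [ball]
  | succ j ih => simp only [ball, Finset.mem_filter, Finset.mem_univ, true_and]; exact Or.inl ih

theorem stmt6' {V : Type*} [Fintype V] [DecidableEq V]
    (E : Finset (V × V)) (r : V) (c : ℕ)
    (p : V) (hp : p ∈ ball E r (c + 1)) (hdp : 1 ≤ degc E r c p)
    (μ : V → ℝ) (μbar : ℝ) (hμ : ∀ u : V, μ u = μbar) :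
    ∀ v : V,
      HasDerivAt (fun x => avgCocoLoss E r c p (Function.update μ v x))
        ((1 / ((Fintype.card V : ℝ) * Real.sqrt ((ball E r c).card : ℝ)))
          * (-(degc E r c p : ℝ)
              + (∑ u ∈ ball E r (c + 1), (degc E r c u : ℝ) * Real.exp (xi E r c μ u))
                / ((∑ w ∈ ball E r (c + 1), Real.exp (xi E r c μ w))
                    + ((Fintype.card V : ℝ) - ((ball E r (c + 1)).card : ℝ)))))
        (μ v) := by
  intro v
  haveI : Nonempty V := ⟨p⟩
  -- derivative of each permuted term
  have hterm : ∀ π : Equiv.Perm V,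
      HasDerivAt (fun x => cocoLoss (permE π E) (π r) c (π p) (Function.update μ v x))
        (gfun E r c p μ (π⁻¹ v)) (μ v) := by
    intro π
    have h := hasDerivAt_cocoLoss (permE π E) (π r) c (π p) μ v
    rwa [Dpi_eq π E r c p μ μbar hμ v] at h
  have hsum : HasDerivAt
      (fun x => ∑ π : Equiv.Perm V, cocoLoss (permE π E) (π r) c (π p) (Function.update μ v x))
      (∑ π : Equiv.Perm V, gfun E r c p μ (π⁻¹ v)) (μ v) :=
    HasDerivAt.fun_sum (fun π _ => hterm π)
  have havg := hsum.const_mul ((Nat.factorial (Fintype.card V) : ℝ))⁻¹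
  have hfun : (fun x => avgCocoLoss E r c p (Function.update μ v x))
      = fun x => ((Nat.factorial (Fintype.card V) : ℝ))⁻¹ *
          ∑ π : Equiv.Perm V, cocoLoss (permE π E) (π r) c (π p) (Function.update μ v x) := rfl
  rw [hfun]
  -- now identify the derivative value
  have hinv : ∑ π : Equiv.Perm V, gfun E r c p μ (π⁻¹ v)
      = ∑ π : Equiv.Perm V, gfun E r c p μ (π v) := by
    have h := Equiv.sum_comp (Equiv.inv (Equiv.Perm V))
      (fun π : Equiv.Perm V => gfun E r c p μ (π v))
    simpa using h
  -- abbreviations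
  set Z := ∑ w : V, Real.exp (xi E r c μ w) with hZdef
  set S := ∑ w ∈ ball E r (c + 1), Real.exp (xi E r c μ w) with hSdef
  set N := ∑ u ∈ ball E r (c + 1), (degc E r c u : ℝ) * Real.exp (xi E r c μ u) with hNdef
  have hZpos : 0 < Z := Finset.sum_pos (fun _ _ => Real.exp_pos _) Finset.univ_nonempty
  have hZeq : Z = S + ((Fintype.card V : ℝ) - ((ball E r (c + 1)).card : ℝ)) := by
    rw [hZdef, ← Finset.sum_add_sum_compl (ball E r (c + 1))
      (fun w => Real.exp (xi E r c μ w))]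
    congr 1
    have : ∀ w ∈ (ball E r (c + 1))ᶜ, Real.exp (xi E r c μ w) = 1 := by
      intro w hw
      rw [xi_eq_zero μ (Finset.mem_compl.1 hw), Real.exp_zero]
    rw [Finset.sum_congr rfl this, Finset.sum_const, nsmul_eq_mul, mul_one,
      Finset.card_compl, Nat.cast_sub (Finset.card_le_univ _)]
  -- column sums of bcf
  have hbc : ∀ w : V, ∑ u : V, bcf E r c u w = lamc E r c * (degc E r c w : ℝ) := by
    intro w
    simp only [bcf]
    rw [← Finset.mul_sum, Finset.sum_boole, degc]
    rw [Finset.filter_univ_mem]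
  -- sum of gfun
  have hA : ∑ u : V, gfun E r c p μ u
      = -(lamc E r c * (degc E r c p : ℝ)) + lamc E r c * N / Z := by
    simp only [gfun, ← hZdef]
    rw [Finset.sum_add_distrib, Finset.sum_neg_distrib, hbc, ← Finset.sum_div]
    congr 2
    rw [Finset.sum_comm]
    have : ∀ w : V, ∑ u : V, bcf E r c u w * Real.exp (xi E r c μ w)
        = lamc E r c * ((degc E r c w : ℝ) * Real.exp (xi E r c μ w)) := by
      intro w
      rw [← Finset.sum_mul, hbc, mul_assoc]
    rw [Finset.sum_congr rfl fun w _ => this w, ← Finset.mul_sum, hNdef]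
    congr 1
    symm
    refine Finset.sum_subset (Finset.subset_univ _) fun w _ hw => ?_
    rw [degc_eq_zero hw]
    simp
  have hkey := sum_perm_apply (gfun E r c p μ) v
  rw [hA] at hkey
  -- nonzero facts
  have hn : (0 : ℝ) < (Fintype.card V : ℝ) := by
    exact_mod_cast Fintype.card_pos
  have hfac : ((Nat.factorial (Fintype.card V) : ℝ)) ≠ 0 := by
    exact_mod_cast (Nat.factorial_pos _).ne'
  have hK : (0 : ℝ) < Real.sqrt ((ball E r c).card : ℝ) := by
    refine Real.sqrt_pos.2 ?_
    exact_mod_cast Finset.card_pos.2 ⟨r, mem_ball_self E r c⟩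
  -- final value computation
  have hval : (1 / ((Fintype.card V : ℝ) * Real.sqrt ((ball E r c).card : ℝ)))
        * (-(degc E r c p : ℝ) + N / (S + ((Fintype.card V : ℝ) - ((ball E r (c + 1)).card : ℝ))))
      = ((Nat.factorial (Fintype.card V) : ℝ))⁻¹ * ∑ π : Equiv.Perm V, gfun E r c p μ (π⁻¹ v) := by
    rw [hinv]
    have hSZ : S + ((Fintype.card V : ℝ) - ((ball E r (c + 1)).card : ℝ)) = Z := hZeq.symm
    rw [hSZ]
    have hl : lamc E r c = 1 / Real.sqrt ((ball E r c).card : ℝ) := rfl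
    rw [hl] at hkey
    field_simp [hl] at hkey ⊢
    nlinarith [hkey]
  rw [hval]
  exact havg


/-- gradient of the permutation-averaged coconut loss when all coordinates
of μ are equal; the value is independent of the coordinate v. -/
theorem stmt6 {V : Type*} [Fintype V] [DecidableEq V]
    (E : Finset (V × V)) (r : V) (c : ℕ)
    (p : V) (hp : p ∈ ball E r (c + 1)) (hdp : 1 ≤ degc E r c p)
    (μ : V → ℝ) (μbar : ℝ) (hμ : ∀ u : V, μ u = μbar) :
    ∀ v : V,
      HasDerivAt (fun x => avgCocoLoss E r c p (Function.update μ v x))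
        ((1 / ((Fintype.card V : ℝ) * Real.sqrt ((ball E r c).card : ℝ)))
          * (-(degc E r c p : ℝ)
              + (∑ u ∈ ball E r (c + 1), (degc E r c u : ℝ) * Real.exp (xi E r c μ u))
                / ((∑ w ∈ ball E r (c + 1), Real.exp (xi E r c μ w))
                    + ((Fintype.card V : ℝ) - ((ball E r (c + 1)).card : ℝ)))))
        (μ v) :=
  stmt6' E r c p hp hdp μ μbar hμ
end

section
/- Assume c0 ≥ 1 and d_max ≥ 1. Let α > 0 and let μ : [0, ∞) → ℝ be differentiable with μ(0) = 0 and μ'(t) = (α/(n√K))·(d_max − F(μ(t))) for all t ≥ 0. Then μ'(t) > 0 for all t ≥ 0, μ(t) → +∞ as t → ∞, and for all t ≥ 0 one has μ(t) ≥ (1/(λ·d_max)) · ln( 1 + (α·λ·d_max²·c0·e^{−λ} / (2·n²·√K)) · t ). -/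
open Finset Filter Matrix

variable {V : Type*}

lemma ball_self {V : Type*} [Fintype V] [DecidableEq V] (E : Finset (V × V)) (r : V) (c : ℕ) :
    r ∈ ball E r c := by
  induction c with
  | zero => simp [ball]
  | succ j ih => simp [ball]; exact Or.inl ih

section FcLemmas
variable {V : Type*} [Fintype V] [DecidableEq V] (E : Finset (V × V)) (r : V) (c : ℕ)

lemma lam_pos : 0 < lamc E r c := by
  have : (0:ℝ) < ((ball E r c).card : ℝ) := by
    have := Finset.card_pos.mpr ⟨r, ball_self E r c⟩
    exact_mod_cast this
  simpa [lamc] using Real.sqrt_pos.mpr this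

lemma Eplus_pos (x : ℝ) :
    0 < ∑ u ∈ ball E r (c + 1),
        Real.exp (lamc E r c * ((if u ∈ ball E r c then 1 else 0) + x * (degc E r c u : ℝ))) := by
  apply Finset.sum_pos (fun u _ => Real.exp_pos _) ⟨r, ball_self E r (c+1)⟩

lemma Fc_lt (hc0 : (ball E r (c + 1)).card + 1 ≤ Fintype.card V)
    (hdmax : 1 ≤ Finset.univ.sup (degc E r c)) (x : ℝ) :
    Fc E r c x < ((Finset.univ.sup (degc E r c) : ℕ) : ℝ) := by
  set d : ℝ := ((Finset.univ.sup (degc E r c) : ℕ) : ℝ) with hd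
  set Ep : ℝ := ∑ u ∈ ball E r (c + 1),
        Real.exp (lamc E r c * ((if u ∈ ball E r c then 1 else 0) + x * (degc E r c u : ℝ))) with hEp
  have hEpos : 0 < Ep := Eplus_pos E r c x
  have hdpos : (0:ℝ) < d := by
    rw [hd]; exact_mod_cast lt_of_lt_of_le one_pos hdmax
  have hc0pos : (0:ℝ) < (Fintype.card V : ℝ) - ((ball E r (c + 1)).card : ℝ) := by
    have : ((ball E r (c + 1)).card : ℝ) + 1 ≤ (Fintype.card V : ℝ) := by exact_mod_cast hc0
    linarith
  have hD : 0 < Ep + ((Fintype.card V : ℝ) - ((ball E r (c + 1)).card : ℝ)) := by linarith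
  rw [Fc, ← hEp, div_lt_iff₀ hD]
  have hS : (∑ u ∈ ball E r (c + 1), (degc E r c u : ℝ) *
      Real.exp (lamc E r c * ((if u ∈ ball E r c then 1 else 0) + x * (degc E r c u : ℝ))))
      ≤ d * Ep := by
    rw [hEp, Finset.mul_sum]
    apply Finset.sum_le_sum
    intro u _
    apply mul_le_mul_of_nonneg_right _ (Real.exp_pos _).le
    rw [hd]; exact_mod_cast Finset.le_sup (Finset.mem_univ u)
  nlinarith

lemma Fc_key (hc0 : (ball E r (c + 1)).card + 1 ≤ Fintype.card V)
    (hdmax : 1 ≤ Finset.univ.sup (degc E r c)) (x : ℝ) (hx : 0 ≤ x) :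
    ((Finset.univ.sup (degc E r c) : ℕ) : ℝ)
      * ((Fintype.card V : ℝ) - ((ball E r (c + 1)).card : ℝ))
      * Real.exp (-(lamc E r c)) * Real.exp (-(lamc E r c * ((Finset.univ.sup (degc E r c) : ℕ) : ℝ) * x))
      / (Fintype.card V : ℝ)
    ≤ ((Finset.univ.sup (degc E r c) : ℕ) : ℝ) - Fc E r c x := by
  set lam : ℝ := lamc E r c with hlam
  set d : ℝ := ((Finset.univ.sup (degc E r c) : ℕ) : ℝ) with hd
  set c0 : ℝ := (Fintype.card V : ℝ) - ((ball E r (c + 1)).card : ℝ) with hc0'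
  set Ep : ℝ := ∑ u ∈ ball E r (c + 1),
        Real.exp (lam * ((if u ∈ ball E r c then 1 else 0) + x * (degc E r c u : ℝ))) with hEp
  have hEpos : 0 < Ep := Eplus_pos E r c x
  have hlampos : 0 < lam := lam_pos E r c
  have hdpos : (0:ℝ) < d := by
    rw [hd]; exact_mod_cast lt_of_lt_of_le one_pos hdmax
  have hc0pos : (0:ℝ) < c0 := by
    have : ((ball E r (c + 1)).card : ℝ) + 1 ≤ (Fintype.card V : ℝ) := by exact_mod_cast hc0
    rw [hc0']; linarith
  have hD : 0 < Ep + c0 := by linarith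
  have hncard : ((ball E r (c+1)).card : ℝ) + c0 = (Fintype.card V : ℝ) := by rw [hc0']; ring
  have hnpos : (0:ℝ) < (Fintype.card V : ℝ) := by
    have : ((ball E r (c+1)).card : ℝ) ≥ 0 := by positivity
    linarith
  have hS : (∑ u ∈ ball E r (c + 1), (degc E r c u : ℝ) *
      Real.exp (lam * ((if u ∈ ball E r c then 1 else 0) + x * (degc E r c u : ℝ))))
      ≤ d * Ep := by
    rw [hEp, Finset.mul_sum]
    apply Finset.sum_le_sum
    intro u _
    apply mul_le_mul_of_nonneg_right _ (Real.exp_pos _).le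
    rw [hd]; exact_mod_cast Finset.le_sup (Finset.mem_univ u)
  have h1 : Fc E r c x ≤ d * Ep / (Ep + c0) := by
    rw [Fc]
    exact (div_le_div_iff_of_pos_right hD).mpr hS
  have hEbound : Ep ≤ ((ball E r (c+1)).card : ℝ) * Real.exp (lam * (1 + d * x)) := by
    rw [hEp]
    calc ∑ u ∈ ball E r (c + 1),
          Real.exp (lam * ((if u ∈ ball E r c then 1 else 0) + x * (degc E r c u : ℝ)))
        ≤ ∑ _u ∈ ball E r (c + 1), Real.exp (lam * (1 + d * x)) := by
          apply Finset.sum_le_sum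
          intro u _
          apply Real.exp_le_exp.mpr
          apply mul_le_mul_of_nonneg_left _ hlampos.le
          have h1' : (if u ∈ ball E r c then (1:ℝ) else 0) ≤ 1 := by split <;> norm_num
          have h2' : x * (degc E r c u : ℝ) ≤ d * x := by
            rw [mul_comm d x]
            apply mul_le_mul_of_nonneg_left _ hx
            rw [hd]; exact_mod_cast Finset.le_sup (Finset.mem_univ u)
          linarith
      _ = ((ball E r (c+1)).card : ℝ) * Real.exp (lam * (1 + d * x)) := by
          rw [Finset.sum_const, nsmul_eq_mul]
  have hexp1 : (1:ℝ) ≤ Real.exp (lam * (1 + d * x)) := by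
    rw [show (1:ℝ) = Real.exp 0 from Real.exp_zero.symm]
    apply Real.exp_le_exp.mpr
    positivity
  have hDbound : Ep + c0 ≤ (Fintype.card V : ℝ) * Real.exp (lam * (1 + d * x)) := by
    have : c0 ≤ c0 * Real.exp (lam * (1 + d * x)) := le_mul_of_one_le_right hc0pos.le hexp1
    calc Ep + c0 ≤ ((ball E r (c+1)).card : ℝ) * Real.exp (lam * (1 + d * x))
          + c0 * Real.exp (lam * (1 + d * x)) := by linarith
      _ = (Fintype.card V : ℝ) * Real.exp (lam * (1 + d * x)) := by rw [← hncard]; ring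
  have h2 : d - Fc E r c x ≥ d * c0 / (Ep + c0) := by
    have : d - d * Ep / (Ep + c0) = d * c0 / (Ep + c0) := by
      field_simp
      ring
    linarith [h1, this]
  have h3 : d * c0 / ((Fintype.card V : ℝ) * Real.exp (lam * (1 + d * x))) ≤ d * c0 / (Ep + c0) := by
    apply div_le_div_of_nonneg_left (by positivity) hD hDbound
  have h4 : d * c0 * Real.exp (-lam) * Real.exp (-(lam * d * x)) / (Fintype.card V : ℝ)
      = d * c0 / ((Fintype.card V : ℝ) * Real.exp (lam * (1 + d * x))) := by
    rw [show lam * (1 + d * x) = lam + lam * d * x by ring, Real.exp_add,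
      Real.exp_neg, Real.exp_neg]
    have h1 : Real.exp lam ≠ 0 := (Real.exp_pos _).ne'
    have h2 : Real.exp (lam * d * x) ≠ 0 := (Real.exp_pos _).ne'
    field_simp
  linarith [h3, h2, h4]
end FcLemmas

/-- the ODE μ' = (α/(n√K))·(d_max − F(μ)) started at 0 has strictly
positive derivative, diverges to +∞, and satisfies a logarithmic lower bound. -/
theorem stmt10 {V : Type*} [Fintype V] [DecidableEq V]
    (E : Finset (V × V)) (r : V) (c : ℕ)
    (hc0 : (ball E r (c + 1)).card + 1 ≤ Fintype.card V)
    (hdmax : 1 ≤ Finset.univ.sup (degc E r c))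
    (α : ℝ) (hα : 0 < α)
    (μ : ℝ → ℝ) (hinit : μ 0 = 0)
    (hode : ∀ t ∈ Set.Ici (0 : ℝ),
      HasDerivWithinAt μ
        ((α / ((Fintype.card V : ℝ) * Real.sqrt ((ball E r c).card : ℝ)))
          * (((Finset.univ.sup (degc E r c) : ℕ) : ℝ) - Fc E r c (μ t)))
        (Set.Ici (0 : ℝ)) t) :
    (∀ t ∈ Set.Ici (0 : ℝ), 0 < derivWithin μ (Set.Ici (0 : ℝ)) t)
    ∧ Filter.Tendsto μ Filter.atTop Filter.atTop
    ∧ ∀ t ∈ Set.Ici (0 : ℝ),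
        (1 / (lamc E r c * ((Finset.univ.sup (degc E r c) : ℕ) : ℝ)))
            * Real.log (1 +
                (α * lamc E r c * ((Finset.univ.sup (degc E r c) : ℕ) : ℝ) ^ 2
                    * ((Fintype.card V : ℝ) - ((ball E r (c + 1)).card : ℝ))
                    * Real.exp (-(lamc E r c))
                  / (2 * (Fintype.card V : ℝ) ^ 2 * Real.sqrt ((ball E r c).card : ℝ)))
                  * t)
          ≤ μ t := by
  classical
  set lam : ℝ := lamc E r c with hlam
  set d : ℝ := ((Finset.univ.sup (degc E r c) : ℕ) : ℝ) with hd
  set n : ℝ := (Fintype.card V : ℝ) with hn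
  set K : ℝ := Real.sqrt ((ball E r c).card : ℝ) with hK
  set c0 : ℝ := n - ((ball E r (c + 1)).card : ℝ) with hc0'
  set C : ℝ := α / (n * K) with hC
  have hlampos : 0 < lam := lam_pos E r c
  have hdpos : (0:ℝ) < d := by
    rw [hd]; exact_mod_cast lt_of_lt_of_le one_pos hdmax
  have hc0pos : (0:ℝ) < c0 := by
    have : ((ball E r (c + 1)).card : ℝ) + 1 ≤ (Fintype.card V : ℝ) := by exact_mod_cast hc0
    rw [hc0', hn]; linarith
  have hnpos : (0:ℝ) < n := by
    have : ((ball E r (c+1)).card : ℝ) ≥ 0 := by positivity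
    rw [hn]
    have h2 : ((ball E r (c + 1)).card : ℝ) + 1 ≤ (Fintype.card V : ℝ) := by exact_mod_cast hc0
    linarith
  have hKpos : 0 < K := by
    rw [hK]
    apply Real.sqrt_pos.mpr
    have := Finset.card_pos.mpr ⟨r, ball_self E r c⟩
    exact_mod_cast this
  have hlamK : lam = 1 / K := by rw [hlam, hK, lamc]
  have hCpos : 0 < C := by rw [hC]; positivity
  set A : ℝ := α * d * c0 * Real.exp (-lam) / (n ^ 2 * K) with hA
  have hApos : 0 < A := by rw [hA]; positivity
  set β : ℝ := lam * d with hβ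
  have hβpos : 0 < β := by rw [hβ]; positivity
  clear_value lam d n K c0 C A β
  -- positivity of the derivative value
  have hpos : ∀ x : ℝ, 0 < C * (d - Fc E r c x) := by
    intro x
    apply mul_pos hCpos
    have := Fc_lt E r c hc0 hdmax x
    rw [← hd] at this
    linarith
  -- part 1
  have part1 : ∀ t ∈ Set.Ici (0 : ℝ), 0 < derivWithin μ (Set.Ici (0 : ℝ)) t := by
    intro t ht
    rw [(hode t ht).derivWithin (uniqueDiffOn_Ici 0 t ht)]
    exact hpos (μ t)
  -- continuity and monotonicity of μ on Ici 0
  have hcont : ContinuousOn μ (Set.Ici (0 : ℝ)) := fun t ht => (hode t ht).continuousWithinAt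
  have hmono : StrictMonoOn μ (Set.Ici (0 : ℝ)) := by
    apply strictMonoOn_of_deriv_pos (convex_Ici 0) hcont
    intro x hx
    rw [interior_Ici] at hx
    have hx' : x ∈ Set.Ici (0:ℝ) := Set.mem_Ici.mpr (le_of_lt (Set.mem_Ioi.mp hx))
    have hda : HasDerivAt μ (C * (d - Fc E r c (μ x))) x :=
      (hode x hx').hasDerivAt (Ici_mem_nhds hx)
    rw [hda.deriv]
    exact hpos (μ x)
  have hμnonneg : ∀ t ∈ Set.Ici (0 : ℝ), 0 ≤ μ t := by
    intro t ht
    rcases eq_or_lt_of_le (Set.mem_Ici.mp ht) with h | h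
    · rw [← h, hinit]
    · have := hmono (Set.self_mem_Ici) ht h
      rw [hinit] at this
      linarith
  -- the auxiliary function h and its monotonicity
  set g : ℝ → ℝ := fun t => Real.exp (β * μ t) - β * A * t with hg
  have hgderiv : ∀ t ∈ Set.Ici (0 : ℝ),
      HasDerivWithinAt g (Real.exp (β * μ t) * (β * (C * (d - Fc E r c (μ t)))) - β * A)
        (Set.Ici (0 : ℝ)) t := by
    intro t ht
    have h1 : HasDerivWithinAt (fun t => β * μ t) (β * (C * (d - Fc E r c (μ t))))
        (Set.Ici (0 : ℝ)) t := (hode t ht).const_mul β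
    have h2 : HasDerivWithinAt (fun t => Real.exp (β * μ t))
        (Real.exp (β * μ t) * (β * (C * (d - Fc E r c (μ t))))) (Set.Ici (0 : ℝ)) t :=
      by have := (Real.hasDerivAt_exp (β * μ t)).comp_hasDerivWithinAt t h1; exact this
    have h3 : HasDerivWithinAt (fun t : ℝ => β * A * t) (β * A) (Set.Ici (0 : ℝ)) t := by
      simpa using (hasDerivWithinAt_id t (Set.Ici (0:ℝ))).const_mul (β * A)
    exact h2.sub h3
  have hgvalnonneg : ∀ t ∈ Set.Ici (0 : ℝ),
      0 ≤ Real.exp (β * μ t) * (β * (C * (d - Fc E r c (μ t)))) - β * A := by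
    intro t ht
    have hkey := Fc_key E r c hc0 hdmax (μ t) (hμnonneg t ht)
    rw [← hlam, ← hd, ← hn, ← hc0'] at hkey
    have h5 : A * Real.exp (-(β * μ t)) ≤ C * (d - Fc E r c (μ t)) := by
      have hAe : A * Real.exp (-(β * μ t))
          = C * (d * c0 * Real.exp (-lam) * Real.exp (-(lam * d * μ t)) / n) := by
        rw [hA, hC, hβ]
        field_simp
      rw [hAe]
      exact mul_le_mul_of_nonneg_left hkey hCpos.le
    have h6 : Real.exp (β * μ t) * (β * (A * Real.exp (-(β * μ t))))
        ≤ Real.exp (β * μ t) * (β * (C * (d - Fc E r c (μ t)))) :=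
      mul_le_mul_of_nonneg_left (mul_le_mul_of_nonneg_left h5 hβpos.le) (Real.exp_pos _).le
    have h7 : Real.exp (β * μ t) * (β * (A * Real.exp (-(β * μ t)))) = β * A := by
      have hne : Real.exp (β * μ t) ≠ 0 := (Real.exp_pos _).ne'
      rw [Real.exp_neg]
      field_simp
    linarith
  have hgmono : MonotoneOn g (Set.Ici (0 : ℝ)) := by
    apply monotoneOn_of_deriv_nonneg (convex_Ici 0)
    · intro t ht
      exact (hgderiv t ht).continuousWithinAt
    · intro x hx
      rw [interior_Ici] at hx
      exact ((hgderiv x (Set.mem_Ici.mpr (le_of_lt (Set.mem_Ioi.mp hx)))).hasDerivAt (Ici_mem_nhds hx)).differentiableAt.differentiableWithinAt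
    · intro x hx
      rw [interior_Ici] at hx
      rw [((hgderiv x (Set.mem_Ici.mpr (le_of_lt (Set.mem_Ioi.mp hx)))).hasDerivAt (Ici_mem_nhds hx)).deriv]
      exact hgvalnonneg x (Set.mem_Ici.mpr (le_of_lt (Set.mem_Ioi.mp hx)))
  have hg0 : g 0 = 1 := by
    rw [hg]; simp [hinit]
  have hglb : ∀ t ∈ Set.Ici (0 : ℝ), 1 + β * A * t ≤ Real.exp (β * μ t) := by
    intro t ht
    have := hgmono Set.self_mem_Ici ht ht
    rw [hg0] at this
    rw [hg] at this
    simp only at this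
    linarith
  -- part 3
  set Cs : ℝ := α * lam * d ^ 2 * c0 * Real.exp (-lam) / (2 * n ^ 2 * K) with hCs
  have hCsA : Cs = β * A / 2 := by
    rw [hCs, hA, hβ]
    field_simp
  have hCspos : 0 < Cs := by rw [hCsA]; positivity
  have part3 : ∀ t ∈ Set.Ici (0 : ℝ), (1 / β) * Real.log (1 + Cs * t) ≤ μ t := by
    intro t ht
    have ht' : (0:ℝ) ≤ t := ht
    have h1pos : (0:ℝ) < 1 + Cs * t := by positivity
    have h2pos : (0:ℝ) < 1 + β * A * t := by positivity
    have hle : 1 + Cs * t ≤ 1 + β * A * t := by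
      rw [hCsA]
      nlinarith [hβpos, hApos]
    have hlog1 : Real.log (1 + Cs * t) ≤ Real.log (1 + β * A * t) :=
      Real.log_le_log h1pos hle
    have hlog2 : Real.log (1 + β * A * t) ≤ β * μ t := by
      calc Real.log (1 + β * A * t) ≤ Real.log (Real.exp (β * μ t)) :=
            Real.log_le_log h2pos (hglb t ht)
        _ = β * μ t := Real.log_exp _
    have := hlog1.trans hlog2
    rw [div_mul_eq_mul_div, one_mul, div_le_iff₀ hβpos]
    linarith
  refine ⟨part1, ?_, ?_⟩
  · -- tendsto
    have t1 : Tendsto (fun t : ℝ => 1 + Cs * t) atTop atTop := by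
      apply tendsto_atTop_add_const_left
      exact (tendsto_id.const_mul_atTop hCspos)
    have t2 : Tendsto (fun t : ℝ => Real.log (1 + Cs * t)) atTop atTop :=
      Real.tendsto_log_atTop.comp t1
    have t3 : Tendsto (fun t : ℝ => (1 / β) * Real.log (1 + Cs * t)) atTop atTop :=
      t2.const_mul_atTop (by positivity)
    apply tendsto_atTop_mono' atTop _ t3
    filter_upwards [eventually_ge_atTop (0:ℝ)] with t ht
    exact part3 t ht
  · intro t ht
    exact part3 t ht
end
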